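/- Let A = 15+4√14, B = 15-4√14. For i ≥ 0 define c_{4i+2} = ((18+5√14)A^i-(18-5√14)B^i)/(2√14) and e_{4i+2} = ((41+11√14)A^i-(41-11√14)B^i)/(2√14). Then for every n ≥ 1, Σ_{k=0}^{n-1} c_{4k+2} · e_{4(n-k-1)+2} = (n/56)·[(1508+403√14)A^{n-1} + (1508-403√14)B^{n-1}] + (4√14/392)·(A^n - B^n). -/

import Mathlib

theorem stmt_7
    (c2 e2 : ℕ → ℝ)
    (hc2 : ∀ i : ℕ, c2 i =
      ((18 + 5 * Real.sqrt 14) * (15 + 4 * Real.sqrt 14) ^ i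
        - (18 - 5 * Real.sqrt 14) * (15 - 4 * Real.sqrt 14) ^ i)
      / (2 * Real.sqrt 14))
    (he2 : ∀ i : ℕ, e2 i =
      ((41 + 11 * Real.sqrt 14) * (15 + 4 * Real.sqrt 14) ^ i
        - (41 - 11 * Real.sqrt 14) * (15 - 4 * Real.sqrt 14) ^ i)
      / (2 * Real.sqrt 14)) :
    ∀ n : ℕ, 1 ≤ n →
      ∑ k ∈ Finset.range n, c2 k * e2 (n - k - 1) =
        (n / 56 : ℝ) * ((1508 + 403 * Real.sqrt 14) * (15 + 4 * Real.sqrt 14) ^ (n-1)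
          + (1508 - 403 * Real.sqrt 14) * (15 - 4 * Real.sqrt 14) ^ (n-1))
        + (4 * Real.sqrt 14 / 392) *
            ((15 + 4 * Real.sqrt 14) ^ n - (15 - 4 * Real.sqrt 14) ^ n) := by
  intro n hn
  set s := Real.sqrt 14 with hsdef
  have hs2 : s * s = 14 := Real.mul_self_sqrt (by norm_num)
  have hspos : (0:ℝ) < s := Real.sqrt_pos.mpr (by norm_num)
  have hsne : s ≠ 0 := ne_of_gt hspos
  set A : ℝ := 15 + 4 * s with hA
  set B : ℝ := 15 - 4 * s with hB
  have hterm : ∀ k ∈ Finset.range n, c2 k * e2 (n - k - 1) =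
      ((1508 + 403*s) * A^(n-1) + (1508 - 403*s) * B^(n-1)
        - (-32 + 7*s) * (A^k * B^(n-1-k)) - (-32 - 7*s) * (B^k * A^(n-1-k))) / 56 := by
    intro k hk
    have hk' : k < n := Finset.mem_range.mp hk
    have h1 : n - k - 1 = n - 1 - k := by omega
    have h2 : A^(n-1) = A^k * A^(n-1-k) := by
      rw [← pow_add]; congr 1; omega
    have h3 : B^(n-1) = B^k * B^(n-1-k) := by
      rw [← pow_add]; congr 1; omega
    rw [hc2, he2, h1, h2, h3]
    have h4 : (2*s) * (2*s) = 56 := by nlinarith [hs2]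
    rw [div_mul_div_comm, h4]
    congr 1
    linear_combination (55 * (A^k * A^(n-1-k) + B^k * B^(n-1-k)
      + A^k * B^(n-1-k) + B^k * A^(n-1-k))) * hs2
  rw [Finset.sum_congr rfl hterm]
  have G1 : (∑ k ∈ Finset.range n, A^k * B^(n-1-k)) * (A - B) = A^n - B^n :=
    geom_sum₂_mul A B n
  have G2 : (∑ k ∈ Finset.range n, B^k * A^(n-1-k)) * (B - A) = B^n - A^n :=
    geom_sum₂_mul B A n
  have hsum : ∑ k ∈ Finset.range n,
      ((1508 + 403*s) * A^(n-1) + (1508 - 403*s) * B^(n-1)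
        - (-32 + 7*s) * (A^k * B^(n-1-k)) - (-32 - 7*s) * (B^k * A^(n-1-k))) / 56
      = ((n:ℝ) * ((1508 + 403*s) * A^(n-1) + (1508 - 403*s) * B^(n-1))
        - (-32 + 7*s) * (∑ k ∈ Finset.range n, A^k * B^(n-1-k))
        - (-32 - 7*s) * (∑ k ∈ Finset.range n, B^k * A^(n-1-k))) / 56 := by
    rw [← Finset.sum_div]
    congr 1
    rw [Finset.sum_sub_distrib, Finset.sum_sub_distrib, Finset.sum_const,
      ← Finset.mul_sum, ← Finset.mul_sum, Finset.card_range]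
    ring
  rw [hsum]
  have hABs : A - B = 8 * s := by rw [hA, hB]; ring
  have hS0 : ((∑ k ∈ Finset.range n, A^k * B^(n-1-k))
      - ∑ k ∈ Finset.range n, B^k * A^(n-1-k)) * (8 * s) = 0 := by
    linear_combination G1 + G2 - ((∑ k ∈ Finset.range n, A^k * B^(n-1-k))
      - ∑ k ∈ Finset.range n, B^k * A^(n-1-k)) * hABs
  have hS : (∑ k ∈ Finset.range n, B^k * A^(n-1-k))
      = ∑ k ∈ Finset.range n, A^k * B^(n-1-k) := by
    have h8 : (8 * s) ≠ 0 := by positivity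
    have := (mul_eq_zero.mp hS0).resolve_right h8
    linarith
  have hAn : A^n - B^n = 8 * s * ∑ k ∈ Finset.range n, A^k * B^(n-1-k) := by
    rw [← G1, hABs]; ring
  linear_combination ((32 + 7*s)/56) * hS - (4*s/392) * hAn
    - (32/392) * (∑ k ∈ Finset.range n, A^k * B^(n-1-k)) * hs2
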